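/- Let d ≥ 2, and let k, m ≥ 0 and l ≥ 1 satisfy k + l + m = d + 1. For each i with 2 ≤ i ≤ d+1, the number of (d+1−i)-dimensional faces G of the (d+1)-cube C^{d+1} such that G lies in some facet belonging to B(k,l,m) and also in some facet of C^{d+1} not belonging to B(k,l,m) equals C(d+1, i)·2^i − Σ_{j=0}^{i} C(l, i−j)·( C(k,j) + C(m,j) )·2^j. Equivalently, this is the number of (d+1−i)-faces of the liftable cubical d-polytope P(k,l,m). -/

import Mathlib

open Set

noncomputable def setDim {n : ℕ} (S : Set (Fin n → ℝ)) : ℕ :=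
  Module.finrank ℝ (vectorSpan ℝ S)

def IsFaceDim {n : ℕ} (P F : Set (Fin n → ℝ)) (k : ℕ) : Prop :=
  IsExposed ℝ P F ∧ F.Nonempty ∧ setDim F = k

def stdCube (n : ℕ) : Set (Fin n → ℝ) := {x | ∀ i, x i ∈ Set.Icc (0:ℝ) 1}

/-- The facet `F_j^+` (for `b = true`) resp. `F_j^-` (for `b = false`) of the
standard cube. -/
def cubeFacet (m : ℕ) (j : Fin m) (b : Bool) : Set (Fin m → ℝ) :=
  {x ∈ stdCube m | x j = if b then 1 else 0}

/-- The facets of `C^{d+1}` that belong to the ball `B(k,l,m)` (0-indexed):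
`F_j^±` for `j < k` and `F_j^+` for `k ≤ j < k+l`. -/
def inBall (k l : ℕ) (j : ℕ) (b : Bool) : Prop :=
  j < k ∨ (b = true ∧ j < k + l)

namespace FaceAux

def fv (b : Bool) : ℝ := if b then 1 else 0

def faceOf {n : ℕ} (σ : Fin n → Option Bool) : Set (Fin n → ℝ) :=
  {x | x ∈ stdCube n ∧ ∀ j b, σ j = some b → x j = fv b}

def pt {n : ℕ} (σ : Fin n → Option Bool) : Fin n → ℝ :=
  fun j => if σ j = some true then 1 else 0

lemma fv_mem (b : Bool) : fv b ∈ Set.Icc (0:ℝ) 1 := by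
  cases b <;> simp [fv]

lemma pt_mem {n : ℕ} (σ : Fin n → Option Bool) : pt σ ∈ faceOf σ := by
  refine ⟨fun j => ?_, fun j b hb => ?_⟩
  · unfold pt; split <;> simp
  · unfold pt
    cases b <;> simp_all [fv]

lemma faceOf_nonempty {n : ℕ} (σ : Fin n → Option Bool) : (faceOf σ).Nonempty :=
  ⟨pt σ, pt_mem σ⟩

/-- signs from a linear functional's coefficients -/
noncomputable def sgn (c : ℝ) : Option Bool := if 0 < c then some true else if c < 0 then some false else none

lemma term_le {x : Fin n → ℝ} (hx : x ∈ stdCube n) (c : ℝ) (j : Fin n) :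
    x j * c ≤ max c 0 := by
  rcases le_or_gt 0 c with h | h
  · calc x j * c ≤ 1 * c := by nlinarith [(hx j).1, (hx j).2]
    _ ≤ max c 0 := by simp
  · calc x j * c ≤ 0 := by nlinarith [(hx j).1, (hx j).2]
    _ ≤ max c 0 := le_max_right _ _

lemma mem_face_iff_terms {n : ℕ} (c : Fin n → ℝ) {x : Fin n → ℝ} (hx : x ∈ stdCube n) :
    x ∈ faceOf (fun j => sgn (c j)) ↔ ∀ j, x j * c j = max (c j) 0 := by
  constructor
  · rintro ⟨-, h⟩ j
    rcases lt_trichotomy (c j) 0 with hc | hc | hc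
    · have := h j false (by simp [sgn, hc, asymm hc])
      simp [fv] at this
      rw [this]; simp [le_of_lt hc]
    · simp [hc]
    · have := h j true (by simp [sgn, hc])
      simp [fv] at this
      rw [this]; simp [le_of_lt hc]
  · intro h
    refine ⟨hx, fun j b hb => ?_⟩
    have hb : sgn (c j) = some b := hb
    unfold sgn at hb
    split_ifs at hb with h1 h2
    · cases hb
      have := h j
      rw [max_eq_left h1.le] at this
      have : x j = 1 := by field_simp at this; nlinarith
      simpa [fv]
    · cases hb
      have := h j
      rw [max_eq_right h2.le] at this
      have : x j = 0 := by
        rcases mul_eq_zero.1 this with h' | h'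
        · exact h'
        · exact absurd h' (ne_of_lt h2)
      simpa [fv]

lemma sum_pt_terms {n : ℕ} (c : Fin n → ℝ) :
    ∀ j, pt (fun j => sgn (c j)) j * c j = max (c j) 0 := by
  intro j
  unfold pt sgn
  rcases lt_trichotomy (c j) 0 with hc | hc | hc
  · simp [asymm hc, ne_of_lt hc, max_eq_right hc.le]
  · simp [hc]
  · simp [hc, max_eq_left hc.le]

/-- The argmax set of a linear functional over the cube is `faceOf` of the sign pattern. -/
lemma argmax_eq {n : ℕ} (c : Fin n → ℝ) :
    {x | x ∈ stdCube n ∧ ∀ y ∈ stdCube n, (∑ j, y j * c j) ≤ ∑ j, x j * c j}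
      = faceOf (fun j => sgn (c j)) := by
  have hpt : pt (fun j => sgn (c j)) ∈ stdCube n := (pt_mem _).1
  have hptsum : ∑ j, pt (fun j => sgn (c j)) j * c j = ∑ j, max (c j) 0 :=
    Finset.sum_congr rfl fun j _ => sum_pt_terms c j
  ext x
  constructor
  · rintro ⟨hx, hmax⟩
    rw [mem_face_iff_terms c hx]
    have h1 : ∑ j, max (c j) 0 ≤ ∑ j, x j * c j := hptsum ▸ hmax _ hpt
    have h2 : ∀ j ∈ Finset.univ, x j * c j ≤ max (c j) 0 := fun j _ => term_le hx (c j) j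
    have heq : ∑ j, x j * c j = ∑ j, max (c j) 0 :=
      le_antisymm (Finset.sum_le_sum h2) h1
    exact fun j => (Finset.sum_eq_sum_iff_of_le h2).1 heq j (Finset.mem_univ j)
  · intro hx
    have hx' := hx.1
    have hterms := (mem_face_iff_terms c hx').1 hx
    refine ⟨hx', fun y hy => ?_⟩
    calc ∑ j, y j * c j ≤ ∑ j, max (c j) 0 :=
          Finset.sum_le_sum fun j _ => term_le hy (c j) j
    _ = ∑ j, x j * c j := (Finset.sum_congr rfl fun j _ => (hterms j).symm)

end FaceAux

namespace FaceAux

/-- coefficients from a sign pattern -/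
noncomputable def cOf {n : ℕ} (σ : Fin n → Option Bool) : Fin n → ℝ :=
  fun j => match σ j with
  | some true => 1
  | some false => -1
  | none => 0

lemma sgn_cOf {n : ℕ} (σ : Fin n → Option Bool) (j : Fin n) : sgn (cOf σ j) = σ j := by
  unfold cOf sgn
  rcases h : σ j with _ | b
  · simp [h]
  · cases b <;> simp [h]


lemma clm_eval {n : ℕ} (l : (Fin n → ℝ) →L[ℝ] ℝ) (x : Fin n → ℝ) :
    l x = ∑ j, x j * l (Pi.single j 1) := by
  conv_lhs => rw [show x = ∑ i, Pi.single i (x i) from (Finset.univ_sum_single x).symm]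
  rw [map_sum]
  refine Finset.sum_congr rfl fun j _ => ?_
  have : (Pi.single j (x j) : Fin n → ℝ) = x j • (Pi.single j (1:ℝ) : Fin n → ℝ) := by
    funext i
    by_cases h : i = j <;> simp [Pi.single_apply, h]
  rw [this, map_smul, smul_eq_mul]

lemma faceOf_isExposed {n : ℕ} (σ : Fin n → Option Bool) :
    IsExposed ℝ (stdCube n) (faceOf σ) := by
  intro _
  classical
  refine ⟨∑ j, cOf σ j • ContinuousLinearMap.proj j, ?_⟩
  have heval : ∀ x : Fin n → ℝ, (∑ j, cOf σ j • ContinuousLinearMap.proj j : (Fin n → ℝ) →L[ℝ] ℝ) x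
      = ∑ j, x j * cOf σ j := by
    intro x
    rw [ContinuousLinearMap.sum_apply]
    refine Finset.sum_congr rfl fun j _ => ?_
    rw [ContinuousLinearMap.smul_apply, ContinuousLinearMap.proj_apply, smul_eq_mul, mul_comm]
  have := argmax_eq (cOf σ)
  have hσ : (fun j => sgn (cOf σ j)) = σ := funext (sgn_cOf σ)
  rw [hσ] at this
  rw [← this]
  ext x
  rw [Set.mem_setOf_eq, Set.mem_setOf_eq, heval x]
  constructor
  · rintro ⟨h1, h2⟩
    exact ⟨h1, fun y hy => by rw [heval y]; exact h2 y hy⟩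
  · rintro ⟨h1, h2⟩
    exact ⟨h1, fun y hy => by rw [← heval y]; exact h2 y hy⟩

lemma exposed_eq_faceOf {n : ℕ} {F : Set (Fin n → ℝ)}
    (hF : IsExposed ℝ (stdCube n) F) (hne : F.Nonempty) :
    ∃ σ : Fin n → Option Bool, F = faceOf σ := by
  obtain ⟨l, hl⟩ := hF hne
  refine ⟨fun j => sgn (l (Pi.single j 1)), ?_⟩
  rw [← argmax_eq (fun j => l (Pi.single j 1))]
  rw [hl]
  ext x
  rw [Set.mem_setOf_eq, Set.mem_setOf_eq, clm_eval l x]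
  constructor
  · rintro ⟨h1, h2⟩
    exact ⟨h1, fun y hy => by rw [← clm_eval l y]; exact h2 y hy⟩
  · rintro ⟨h1, h2⟩
    exact ⟨h1, fun y hy => by rw [clm_eval l y]; exact h2 y hy⟩

lemma pt_none {n : ℕ} {σ : Fin n → Option Bool} {j : Fin n} (h : σ j = none) :
    pt σ j = 0 := by simp [pt, h]

lemma shift_mem {n : ℕ} {σ : Fin n → Option Bool} {j : Fin n} (h : σ j = none) :
    pt σ + Pi.single j 1 ∈ faceOf σ := by
  refine ⟨fun i => ?_, fun i b hb => ?_⟩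
  · by_cases hij : i = j
    · subst hij
      simp [pt_none h, Pi.single_eq_same]
    · simp only [Pi.add_apply, Pi.single_eq_of_ne hij, add_zero]
      exact (pt_mem σ).1 i
  · have hij : i ≠ j := fun he => by rw [he, h] at hb; exact absurd hb (by simp)
    simp only [Pi.add_apply, Pi.single_eq_of_ne hij, add_zero]
    exact (pt_mem σ).2 i b hb

lemma vectorSpan_faceOf {n : ℕ} (σ : Fin n → Option Bool) :
    vectorSpan ℝ (faceOf σ) =
      Submodule.span ℝ ((fun j => Pi.single j (1:ℝ)) '' {j | σ j = none}) := by
  classical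
  apply le_antisymm
  · rw [vectorSpan_def]
    rw [Submodule.span_le]
    rintro v ⟨x, hx, y, hy, rfl⟩
    show x -ᵥ y ∈ _
    have hv : ∀ i, σ i ≠ none → (x -ᵥ y) i = 0 := by
      intro i hi
      rcases hob : σ i with _ | b
      · exact absurd hob hi
      · have h1 := hx.2 i b hob
        have h2 := hy.2 i b hob
        simp [Pi.sub_apply, h1, h2]
    have hrepr : (x -ᵥ y) = ∑ i ∈ Finset.univ.filter (fun i => σ i = none),
        ((x -ᵥ y) i) • (Pi.single i (1:ℝ) : Fin n → ℝ) := by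
      conv_lhs => rw [show (x -ᵥ y : Fin n → ℝ) = ∑ i, Pi.single i ((x -ᵥ y) i) from
        (Finset.univ_sum_single _).symm]
      rw [← Finset.sum_filter_add_sum_filter_not Finset.univ (fun i => σ i = none)]
      have hz : ∑ i ∈ Finset.univ.filter (fun i => ¬ σ i = none),
          Pi.single i ((x -ᵥ y) i) = 0 := by
        apply Finset.sum_eq_zero
        intro i hi
        rw [hv i (Finset.mem_filter.1 hi).2]
        exact Pi.single_zero i
      rw [hz, add_zero]
      refine Finset.sum_congr rfl fun i _ => ?_
      funext i'
      by_cases h : i' = i <;> simp [Pi.single_apply, h]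
    rw [hrepr]
    apply Submodule.sum_mem
    intro i hi
    exact Submodule.smul_mem _ _ (Submodule.subset_span
      ⟨i, (Finset.mem_filter.1 hi).2, rfl⟩)
  · rw [Submodule.span_le]
    rintro v ⟨j, hj, rfl⟩
    have h2 : Pi.single j (1:ℝ) = (pt σ + Pi.single j 1) -ᵥ pt σ := by
      simp [vsub_eq_sub]
    show Pi.single j (1:ℝ) ∈ (vectorSpan ℝ (faceOf σ) : Set (Fin n → ℝ))
    rw [h2]
    exact vsub_mem_vectorSpan ℝ (shift_mem hj) (pt_mem σ)

lemma setDim_faceOf {n : ℕ} (σ : Fin n → Option Bool) :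
    setDim (faceOf σ) = (Finset.univ.filter (fun j => σ j = none)).card := by
  classical
  unfold setDim
  rw [vectorSpan_faceOf, Set.image_eq_range]
  have hli : LinearIndependent ℝ
      (fun j : ↥{j : Fin n | σ j = none} => (Pi.single (j : Fin n) (1:ℝ) : Fin n → ℝ)) := by
    have h2 := (Pi.basisFun ℝ (Fin n)).linearIndependent.comp
        (Subtype.val : ↥{j : Fin n | σ j = none} → Fin n) Subtype.val_injective
    have h3 : (⇑(Pi.basisFun ℝ (Fin n)) ∘ Subtype.val)
        = (fun j : ↥{j : Fin n | σ j = none} => (Pi.single (j : Fin n) (1:ℝ) : Fin n → ℝ)) := by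
      funext j
      rw [Function.comp_apply, Pi.basisFun_apply]
    rwa [h3] at h2
  rw [finrank_span_eq_card hli, Fintype.card_subtype]
  simp only [Set.mem_setOf_eq]

end FaceAux

namespace FaceAux

lemma subset_facet_iff {n : ℕ} (σ : Fin n → Option Bool) (j : Fin n) (b : Bool) :
    faceOf σ ⊆ cubeFacet n j b ↔ σ j = some b := by
  constructor
  · intro h
    rcases hc : σ j with _ | b'
    · exfalso
      have h1 := (h (pt_mem σ)).2
      have h2 := (h (shift_mem hc)).2
      rw [pt_none hc] at h1
      have : (pt σ + Pi.single j 1 : Fin n → ℝ) j = 1 := by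
        simp [pt_none hc, Pi.single_eq_same]
      rw [this] at h2
      rw [← h2] at h1
      norm_num at h1
    · have h1 := (h (pt_mem σ)).2
      have h2 : pt σ j = fv b' := (pt_mem σ).2 j b' hc
      rw [h2] at h1
      cases b' <;> cases b <;> simp_all [fv]
  · intro hb x hx
    exact ⟨hx.1, hx.2 j b hb⟩

lemma faceOf_injective {n : ℕ} : Function.Injective (faceOf (n := n)) := by
  intro σ τ h
  funext j
  have key : ∀ b, σ j = some b ↔ τ j = some b := fun b => by
    rw [← subset_facet_iff, ← subset_facet_iff, h]
  rcases hσ : σ j with _ | b <;> rcases hτ : τ j with _ | b'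
  · rfl
  · exact absurd ((key b').2 hτ) (by rw [hσ]; simp)
  · exact absurd ((key b).1 hσ) (by rw [hτ]; simp)
  · rw [← hτ, ((key b).1 hσ)]

/-- Bridge: the face set of the theorem is the image of a set of sign patterns. -/
lemma face_set_eq_image (d k l m i : ℕ) :
    {G : Set (Fin (d + 1) → ℝ) |
        IsFaceDim (stdCube (d + 1)) G (d + 1 - i) ∧
        (∃ j : Fin (d + 1), ∃ b : Bool, inBall k l j.1 b ∧ G ⊆ cubeFacet (d + 1) j b) ∧
        (∃ j : Fin (d + 1), ∃ b : Bool, ¬ inBall k l j.1 b ∧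
          G ⊆ cubeFacet (d + 1) j b)}
    = faceOf '' {σ : Fin (d + 1) → Option Bool |
        (Finset.univ.filter (fun j => σ j = none)).card = d + 1 - i ∧
        (∃ j : Fin (d + 1), ∃ b : Bool, inBall k l j.1 b ∧ σ j = some b) ∧
        (∃ j : Fin (d + 1), ∃ b : Bool, ¬ inBall k l j.1 b ∧ σ j = some b)} := by
  ext G
  constructor
  · rintro ⟨⟨hexp, hne, hdim⟩, hA, hB⟩
    obtain ⟨σ, rfl⟩ := exposed_eq_faceOf hexp hne
    refine ⟨σ, ⟨?_, ?_, ?_⟩, rfl⟩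
    · rw [← setDim_faceOf]; exact hdim
    · obtain ⟨j, b, hball, hsub⟩ := hA
      exact ⟨j, b, hball, (subset_facet_iff σ j b).1 hsub⟩
    · obtain ⟨j, b, hball, hsub⟩ := hB
      exact ⟨j, b, hball, (subset_facet_iff σ j b).1 hsub⟩
  · rintro ⟨σ, ⟨hdim, hA, hB⟩, rfl⟩
    refine ⟨⟨faceOf_isExposed σ, faceOf_nonempty σ, ?_⟩, ?_, ?_⟩
    · rw [setDim_faceOf]; exact hdim
    · obtain ⟨j, b, hball, hb⟩ := hA
      exact ⟨j, b, hball, (subset_facet_iff σ j b).2 hb⟩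
    · obtain ⟨j, b, hball, hb⟩ := hB
      exact ⟨j, b, hball, (subset_facet_iff σ j b).2 hb⟩

end FaceAux

namespace FaceAux

open Finset Polynomial

/-- The number of partial sign vectors with support of size `i` and signs restricted by `A`. -/
lemma count_weight (n i : ℕ) (A : Fin n → Finset Bool) :
    (Finset.univ.filter fun σ : Fin n → Option Bool =>
        (Finset.univ.filter fun j => σ j ≠ none).card = i ∧
        ∀ j b, σ j = some b → b ∈ A j).card
      = ∑ s ∈ (Finset.univ : Finset (Fin n)).powersetCard i, ∏ j ∈ s, (A j).card := by
  classical
  rw [Finset.card_eq_sum_card_fiberwise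
    (f := fun σ : Fin n → Option Bool => Finset.univ.filter fun j => σ j ≠ none)
    (t := (Finset.univ : Finset (Fin n)).powersetCard i)
    (fun σ hσ => by
      rw [Finset.mem_coe, Finset.mem_powersetCard]
      exact ⟨Finset.subset_univ _, (Finset.mem_filter.1 (Finset.mem_coe.1 hσ)).2.1⟩)]
  refine Finset.sum_congr rfl fun s hs => ?_
  rw [Finset.mem_powersetCard] at hs
  rw [Finset.filter_filter]
  have hcard : (s.pi fun j => A j).card = ∏ j ∈ s, (A j).card := Finset.card_pi s _
  rw [← hcard]
  apply Finset.card_bij'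
    (i := fun σ _ => fun j _ => (σ j).iget)
    (j := fun f _ => fun j => if h : j ∈ s then some (f j h) else none)
  case hi =>
    intro σ hσ
    rw [Finset.mem_filter] at hσ
    obtain ⟨-, ⟨-, hval⟩, hsupp⟩ := hσ
    rw [Finset.mem_pi]
    intro j hj
    have hne : σ j ≠ none := by
      have := hsupp ▸ hj
      exact (Finset.mem_filter.1 this).2
    rcases hb : σ j with _ | b
    · exact absurd hb hne
    · exact hval j b hb
  case hj =>
    intro f hf
    rw [Finset.mem_pi] at hf
    rw [Finset.mem_filter]
    have hsupp : (Finset.univ.filter fun j =>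
        (if h : j ∈ s then some (f j h) else none) ≠ none) = s := by
      ext j
      simp only [Finset.mem_filter, Finset.mem_univ, true_and]
      by_cases h : j ∈ s <;> simp [h]
    refine ⟨Finset.mem_univ _, ⟨?_, ?_⟩, hsupp⟩
    · rw [hsupp]; exact hs.2
    · intro j b hb
      by_cases h : j ∈ s
      · simp only [dif_pos h] at hb
        cases hb
        exact hf j h
      · simp only [dif_neg h] at hb
        exact absurd hb (by simp)
  · -- left inverse
    intro σ hσ
    rw [Finset.mem_filter] at hσ
    obtain ⟨-, -, hsupp⟩ := hσ
    funext j
    by_cases h : j ∈ s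
    · rw [dif_pos h]
      have hmem : j ∈ Finset.univ.filter (fun j => σ j ≠ none) := by rw [hsupp]; exact h
      have hne : σ j ≠ none := (Finset.mem_filter.1 hmem).2
      rcases hb : σ j with _ | b
      · exact absurd hb hne
      · simp only [hb, Option.iget_some]
    · rw [dif_neg h]
      have hn : ¬ σ j ≠ none := fun hne =>
        h (hsupp ▸ Finset.mem_filter.2 ⟨Finset.mem_univ _, hne⟩)
      push_neg at hn
      rw [hn]
  · -- right inverse
    intro f hf
    funext j hj
    simp only [dif_pos hj, Option.iget_some]

/-- The weighted sum over supports of size `i` is a coefficient of a product polynomial. -/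
lemma sum_powersetCard_eq_coeff (n i : ℕ) (w : Fin n → ℕ) :
    ∑ s ∈ (Finset.univ : Finset (Fin n)).powersetCard i, ∏ j ∈ s, w j
      = (∏ j, (1 + C (w j) * X : Polynomial ℕ)).coeff i := by
  classical
  have hprod : ∏ j, (1 + C (w j) * X : Polynomial ℕ)
      = ∑ t ∈ (Finset.univ : Finset (Fin n)).powerset,
          C (∏ j ∈ t, w j) * X ^ t.card := by
    have h1 : ∀ j : Fin n, (1 + C (w j) * X : Polynomial ℕ) = C (w j) * X + 1 := fun j => by ring
    rw [Finset.prod_congr rfl fun j _ => h1 j, Finset.prod_add]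
    refine Finset.sum_congr rfl fun t _ => ?_
    rw [Finset.prod_const_one, mul_one, Finset.prod_mul_distrib, Finset.prod_const, map_prod]
  rw [hprod, Polynomial.finset_sum_coeff]
  have h2 : ∀ t ∈ (Finset.univ : Finset (Fin n)).powerset,
      (C (∏ j ∈ t, w j) * X ^ t.card : Polynomial ℕ).coeff i
        = if t.card = i then ∏ j ∈ t, w j else 0 := by
    intro t _
    rw [Polynomial.coeff_C_mul, Polynomial.coeff_X_pow]
    by_cases h : t.card = i
    · simp [h]
    · simp [h, Ne.symm h, fun hh : i = t.card => h hh.symm]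
  rw [Finset.sum_congr rfl h2, ← Finset.sum_filter, Finset.powersetCard_eq_filter]

lemma coeff_one_add_pow (a t i : ℕ) :
    ((1 + C a * X : Polynomial ℕ) ^ t).coeff i = t.choose i * a ^ i := by
  classical
  have := sum_powersetCard_eq_coeff t i (fun _ => a)
  rw [Finset.prod_const, Finset.card_univ, Fintype.card_fin] at this
  rw [← this]
  have h1 : ∀ s ∈ (Finset.univ : Finset (Fin t)).powersetCard i,
      ∏ _j ∈ s, a = a ^ i := by
    intro s hs
    rw [Finset.prod_const, (Finset.mem_powersetCard.1 hs).2]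
  rw [Finset.sum_congr rfl h1, Finset.sum_const, Finset.card_powersetCard,
    Finset.card_univ, Fintype.card_fin, smul_eq_mul]

end FaceAux

namespace FaceAux

open Finset Polynomial

lemma prod_blocks (k l m a b c : ℕ) (w : ℕ → ℕ)
    (hw : ∀ j, w j = if j < k then a else if j < k + l then b else c) :
    ∏ j ∈ Finset.range (k + l + m), (1 + C (w j) * X : Polynomial ℕ)
      = (1 + C a * X) ^ k * ((1 + C b * X) ^ l * (1 + C c * X) ^ m) := by
  rw [add_assoc, Finset.prod_range_add, Finset.prod_range_add]
  congr 1
  · rw [Finset.prod_congr rfl (fun x hx => by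
      rw [hw x, if_pos (Finset.mem_range.1 hx)]), Finset.prod_const, Finset.card_range]
  congr 1
  · rw [Finset.prod_congr rfl (fun x hx => by
      have h1 : ¬ k + x < k := by omega
      have h2 : k + x < k + l := by have := Finset.mem_range.1 hx; omega
      rw [hw (k + x), if_neg h1, if_pos h2]), Finset.prod_const, Finset.card_range]
  · rw [Finset.prod_congr rfl (fun x hx => by
      have h1 : ¬ k + (l + x) < k := by omega
      have h2 : ¬ k + (l + x) < k + l := by omega
      rw [hw (k + (l + x)), if_neg h1, if_neg h2]), Finset.prod_const, Finset.card_range]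

lemma coeff_two_pows (a b s t i : ℕ) :
    ((1 + C a * X : Polynomial ℕ) ^ s * (1 + C b * X) ^ t).coeff i
      = ∑ j ∈ Finset.range (i + 1), s.choose j * a ^ j * (t.choose (i - j) * b ^ (i - j)) := by
  rw [Polynomial.coeff_mul, Finset.Nat.sum_antidiagonal_eq_sum_range_succ_mk]
  exact Finset.sum_congr rfl fun j _ => by rw [coeff_one_add_pow, coeff_one_add_pow]

/-- combined: the count with threshold weights -/
lemma count_threshold (k l m i : ℕ) (A : Fin (k + l + m) → Finset Bool) (a b c : ℕ)
    (hA : ∀ j : Fin (k + l + m), (A j).card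
      = if j.1 < k then a else if j.1 < k + l then b else c) :
    (Finset.univ.filter fun σ : Fin (k + l + m) → Option Bool =>
        (Finset.univ.filter fun j => σ j ≠ none).card = i ∧
        ∀ j b', σ j = some b' → b' ∈ A j).card
      = ((1 + C a * X : Polynomial ℕ) ^ k *
          ((1 + C b * X) ^ l * (1 + C c * X) ^ m)).coeff i := by
  classical
  rw [count_weight]
  have hw : ∀ s : Finset (Fin (k + l + m)), ∏ j ∈ s, (A j).card
      = ∏ j ∈ s, (fun jj : ℕ => if jj < k then a else if jj < k + l then b else c) j.1 :=
    fun s => Finset.prod_congr rfl fun j _ => hA j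
  rw [Finset.sum_congr rfl fun s _ => hw s]
  have := sum_powersetCard_eq_coeff (k + l + m) i
    (fun j : Fin (k + l + m) => if j.1 < k then a else if j.1 < k + l then b else c)
  rw [this]
  congr 1
  rw [← prod_blocks k l m a b c
    (fun jj => if jj < k then a else if jj < k + l then b else c) (fun _ => rfl)]
  exact Fin.prod_univ_eq_prod_range
    (fun jj => (1 + C (if jj < k then a else if jj < k + l then b else c) * X : Polynomial ℕ))
    (k + l + m)

end FaceAux

namespace FaceAux

open Finset Polynomial

lemma count_threshold' (n k l m i : ℕ) (h : k + l + m = n) (A : Fin n → Finset Bool)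
    (a b c : ℕ)
    (hA : ∀ j : Fin n, (A j).card = if j.1 < k then a else if j.1 < k + l then b else c) :
    (Finset.univ.filter fun σ : Fin n → Option Bool =>
        (Finset.univ.filter fun j => σ j ≠ none).card = i ∧
        ∀ j b', σ j = some b' → b' ∈ A j).card
      = ((1 + C a * X : Polynomial ℕ) ^ k *
          ((1 + C b * X) ^ l * (1 + C c * X) ^ m)).coeff i := by
  subst h
  exact count_threshold k l m i A a b c hA

lemma not_inBall_iff (k l : ℕ) (j : ℕ) (b : Bool) :
    (b ∈ (if j < k then (∅ : Finset Bool) else if j < k + l then {false} else Finset.univ)) ↔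
      ¬ inBall k l j b := by
  unfold inBall
  split_ifs with h1 h2
  · simp [h1]
  · cases b <;> simp [h1, h2]
  · cases b <;> simp [h1, h2]

lemma inBall_iff (k l : ℕ) (j : ℕ) (b : Bool) :
    (b ∈ (if j < k then (Finset.univ : Finset Bool) else if j < k + l then {true} else ∅)) ↔
      inBall k l j b := by
  unfold inBall
  split_ifs with h1 h2
  · simp [h1]
  · cases b <;> simp [h1, h2]
  · cases b <;> simp [h1, h2]

end FaceAux


open FaceAux Finset Polynomial in
/-- Face counts of the liftable cubical `d`-polytope `P(k,l,m)`: the number of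
`(d+1−i)`-faces `G` of the `(d+1)`-cube lying in some facet of `B(k,l,m)` and
in some facet of the complement equals
`C(d+1,i)·2^i − Σ_{j=0}^{i} C(l,i−j)·(C(k,j)+C(m,j))·2^j`. -/
theorem face_count_liftable (d k l m i : ℕ) (hd : 2 ≤ d) (hl : 1 ≤ l)
    (hsum : k + l + m = d + 1) (hi1 : 2 ≤ i) (hi2 : i ≤ d + 1) :
    ({G : Set (Fin (d + 1) → ℝ) |
        IsFaceDim (stdCube (d + 1)) G (d + 1 - i) ∧
        (∃ j : Fin (d + 1), ∃ b : Bool, inBall k l j.1 b ∧ G ⊆ cubeFacet (d + 1) j b) ∧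
        (∃ j : Fin (d + 1), ∃ b : Bool, ¬ inBall k l j.1 b ∧
          G ⊆ cubeFacet (d + 1) j b)}.ncard : ℤ)
      = ((d + 1).choose i : ℤ) * 2 ^ i
        - ∑ j ∈ Finset.range (i + 1),
            (l.choose (i - j) : ℤ) * ((k.choose j : ℤ) + (m.choose j : ℤ)) * 2 ^ j := by
  classical
  rw [face_set_eq_image d k l m i, Set.ncard_image_of_injective _ faceOf_injective]
  -- predicates
  set cA : (Fin (d + 1) → Option Bool) → Prop :=
    fun σ => ∃ j : Fin (d + 1), ∃ b : Bool, inBall k l j.1 b ∧ σ j = some b with hcA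
  set cB : (Fin (d + 1) → Option Bool) → Prop :=
    fun σ => ∃ j : Fin (d + 1), ∃ b : Bool, ¬ inBall k l j.1 b ∧ σ j = some b with hcB
  set sup : (Fin (d + 1) → Option Bool) → ℕ :=
    fun σ => (Finset.univ.filter fun j => σ j ≠ none).card with hsup
  -- cards balance
  have hbalance : ∀ σ : Fin (d + 1) → Option Bool,
      (Finset.univ.filter fun j => σ j = none).card + sup σ = d + 1 := by
    intro σ
    rw [hsup]
    have h := Finset.card_filter_add_card_filter_not
      (s := (Finset.univ : Finset (Fin (d + 1)))) (p := fun j => σ j = none)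
    rw [Finset.card_univ, Fintype.card_fin] at h
    convert h using 3
  have hsup_le : ∀ σ : Fin (d + 1) → Option Bool, sup σ ≤ d + 1 := by
    intro σ
    have := hbalance σ
    omega
  -- convert set to finset
  have hseteq : {σ : Fin (d + 1) → Option Bool |
        (Finset.univ.filter (fun j => σ j = none)).card = d + 1 - i ∧
        (∃ j : Fin (d + 1), ∃ b : Bool, inBall k l j.1 b ∧ σ j = some b) ∧
        (∃ j : Fin (d + 1), ∃ b : Bool, ¬ inBall k l j.1 b ∧ σ j = some b)}
      = ↑(Finset.univ.filter fun σ : Fin (d + 1) → Option Bool =>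
          sup σ = i ∧ cA σ ∧ cB σ) := by
    ext σ
    simp only [Set.mem_setOf_eq, Finset.coe_filter, Finset.mem_univ, true_and]
    have hb := hbalance σ
    constructor
    · rintro ⟨h1, h2, h3⟩
      exact ⟨by omega, h2, h3⟩
    · rintro ⟨h1, h2, h3⟩
      exact ⟨by omega, h2, h3⟩
  rw [hseteq, Set.ncard_coe_finset]
  -- the three counts
  have hNU : (Finset.univ.filter fun σ : Fin (d + 1) → Option Bool => sup σ = i ∧
      (∀ j b', σ j = some b' → b' ∈ (Finset.univ : Finset Bool))).card
      = (d + 1).choose i * 2 ^ i := by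
    rw [count_threshold' (d + 1) k l m i hsum _ 2 2 2 (fun j => by split_ifs <;> simp)]
    rw [← pow_add, ← pow_add, show k + (l + m) = d + 1 by omega, coeff_one_add_pow]
  have hNA : (Finset.univ.filter fun σ : Fin (d + 1) → Option Bool => sup σ = i ∧ ¬ cA σ).card
      = ∑ j ∈ Finset.range (i + 1), m.choose j * 2 ^ j * (l.choose (i - j) * 1 ^ (i - j)) := by
    have heq : ∀ σ : Fin (d + 1) → Option Bool, (¬ cA σ) ↔
        (∀ j b', σ j = some b' → b' ∈ (if j.1 < k then (∅ : Finset Bool)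
          else if j.1 < k + l then {false} else Finset.univ)) := by
      intro σ
      constructor
      · intro h j b' hb'
        rw [not_inBall_iff]
        intro hball
        exact h ⟨j, b', hball, hb'⟩
      · rintro h ⟨j, b', hball, hb'⟩
        exact ((not_inBall_iff k l j.1 b').1 (h j b' hb')) hball
    rw [Finset.filter_congr (fun σ _ => by rw [heq σ])]
    rw [count_threshold' (d + 1) k l m i hsum _ 0 1 2 (fun j => by split_ifs <;> simp)]
    have hC0 : (1 + C (0:ℕ) * X : Polynomial ℕ) = 1 := by simp
    rw [hC0, one_pow, one_mul, mul_comm, coeff_two_pows]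
  have hNB : (Finset.univ.filter fun σ : Fin (d + 1) → Option Bool => sup σ = i ∧ ¬ cB σ).card
      = ∑ j ∈ Finset.range (i + 1), k.choose j * 2 ^ j * (l.choose (i - j) * 1 ^ (i - j)) := by
    have heq : ∀ σ : Fin (d + 1) → Option Bool, (¬ cB σ) ↔
        (∀ j b', σ j = some b' → b' ∈ (if j.1 < k then (Finset.univ : Finset Bool)
          else if j.1 < k + l then {true} else ∅)) := by
      intro σ
      constructor
      · intro h j b' hb'
        rw [inBall_iff]
        by_contra hball
        exact h ⟨j, b', hball, hb'⟩
      · rintro h ⟨j, b', hball, hb'⟩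
        exact hball ((inBall_iff k l j.1 b').1 (h j b' hb'))
    rw [Finset.filter_congr (fun σ _ => by rw [heq σ])]
    rw [count_threshold' (d + 1) k l m i hsum _ 2 1 0 (fun j => by split_ifs <;> simp)]
    have hC0 : (1 + C (0:ℕ) * X : Polynomial ℕ) = 1 := by simp
    rw [hC0, one_pow, mul_one, coeff_two_pows]
  -- decomposition
  have hU : (Finset.univ.filter fun σ : Fin (d + 1) → Option Bool => sup σ = i).card
      = (d + 1).choose i * 2 ^ i := by
    rw [← hNU]
    congr 1
    apply Finset.filter_congr
    intro σ _
    simp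
  have hdecomp : (Finset.univ.filter fun σ : Fin (d + 1) → Option Bool =>
        sup σ = i ∧ cA σ ∧ cB σ).card
      + ((Finset.univ.filter fun σ : Fin (d + 1) → Option Bool => sup σ = i ∧ ¬ cA σ).card
        + (Finset.univ.filter fun σ : Fin (d + 1) → Option Bool => sup σ = i ∧ ¬ cB σ).card)
      = (Finset.univ.filter fun σ : Fin (d + 1) → Option Bool => sup σ = i).card := by
    set U := Finset.univ.filter fun σ : Fin (d + 1) → Option Bool => sup σ = i with hUdef
    have e1 : (Finset.univ.filter fun σ : Fin (d + 1) → Option Bool =>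
        sup σ = i ∧ cA σ ∧ cB σ) = U.filter (fun σ => cA σ ∧ cB σ) := by
      rw [hUdef, Finset.filter_filter]
    have e2 : (Finset.univ.filter fun σ : Fin (d + 1) → Option Bool => sup σ = i ∧ ¬ cA σ)
        = U.filter (fun σ => ¬ cA σ) := by rw [hUdef, Finset.filter_filter]
    have e3 : (Finset.univ.filter fun σ : Fin (d + 1) → Option Bool => sup σ = i ∧ ¬ cB σ)
        = U.filter (fun σ => ¬ cB σ) := by rw [hUdef, Finset.filter_filter]
    rw [e1, e2, e3]
    have hneg : U.filter (fun σ => ¬ (cA σ ∧ cB σ))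
        = U.filter (fun σ => ¬ cA σ) ∪ U.filter (fun σ => ¬ cB σ) := by
      rw [← Finset.filter_or]
      apply Finset.filter_congr
      intro σ _
      constructor
      · intro h
        by_cases hA : cA σ
        · exact Or.inr (fun hB => h ⟨hA, hB⟩)
        · exact Or.inl hA
      · rintro (h | h) ⟨h1, h2⟩
        · exact h h1
        · exact h h2
    have hdisj : Disjoint (U.filter (fun σ => ¬ cA σ)) (U.filter (fun σ => ¬ cB σ)) := by
      rw [Finset.disjoint_left]
      intro σ hσ1 hσ2
      obtain ⟨hσU, hnA⟩ := Finset.mem_filter.1 hσ1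
      obtain ⟨-, hnB⟩ := Finset.mem_filter.1 hσ2
      have hsupi : sup σ = i := (Finset.mem_filter.1 hσU).2
      have hi' : (Finset.univ.filter fun j => σ j ≠ none).card = i := hsupi
      have h0i : 0 < i := Nat.lt_of_lt_of_le Nat.zero_lt_two hi1
      have hpos' : (Finset.univ.filter fun j => σ j ≠ none).Nonempty :=
        Finset.card_pos.1 (hi'.symm ▸ h0i)
      obtain ⟨j, hj⟩ := hpos'
      have hjne : σ j ≠ none := (Finset.mem_filter.1 hj).2
      rcases hb : σ j with _ | b
      · exact hjne hb
      · by_cases hball : inBall k l j.1 b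
        · exact hnA ⟨j, b, hball, hb⟩
        · exact hnB ⟨j, b, hball, hb⟩
    rw [← Finset.card_union_of_disjoint hdisj, ← hneg]
    exact Finset.card_filter_add_card_filter_not _
  -- final arithmetic
  rw [hNA, hNB, hU] at hdecomp
  have hz := congrArg (Nat.cast : ℕ → ℤ) hdecomp
  push_cast at hz
  have hsplit : ∑ j ∈ Finset.range (i + 1),
      (l.choose (i - j) : ℤ) * ((k.choose j : ℤ) + (m.choose j : ℤ)) * 2 ^ j
      = (∑ j ∈ Finset.range (i + 1), (m.choose j : ℤ) * 2 ^ j * ((l.choose (i - j) : ℤ) * 1 ^ (i - j)))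
        + ∑ j ∈ Finset.range (i + 1), (k.choose j : ℤ) * 2 ^ j * ((l.choose (i - j) : ℤ) * 1 ^ (i - j)) := by
    rw [← Finset.sum_add_distrib]
    exact Finset.sum_congr rfl fun j _ => by ring
  rw [hsplit]
  linarith [hz]
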